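/- arXiv:1308.0574 — 4 statements merged into one kernel-verified Lean document; each statement's English description precedes it below -/
import Mathlib

section
/- Let f ∈ ℤ[x_0, ..., x_{n+1}] be homogeneous of degree d, irreducible over ℚ but reducible over the algebraic closure of ℚ. Then there exists a homogeneous polynomial g ∈ ℤ[x_0, ..., x_{n+1}] of degree at most d, not divisible by f, that vanishes at every rational zero of f. -/
open MvPolynomial

namespace Stmt6Aux

variable {σ : Type*}

lemma degree_sum_eq (m : σ →₀ ℕ) : (m.sum fun _ e => e) = m.degree := rfl

lemma coeff_eq_zero_of_lt {R : Type*} [CommSemiring R] {f : MvPolynomial σ R} {d : σ →₀ ℕ}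
    (h : f.totalDegree < d.degree) : coeff d f = 0 :=
  coeff_eq_zero_of_totalDegree_lt (by exact h)

lemma degree_add (u v : σ →₀ ℕ) : (u + v).degree = u.degree + v.degree := by
  simp [Finsupp.degree_eq_weight_one, map_add]

lemma exists_top {R : Type*} [CommSemiring R] {p : MvPolynomial σ R} (hp : p ≠ 0) :
    ∃ m ∈ p.support, m.degree = p.totalDegree := by
  have h : p.support.Nonempty := by
    rw [Finset.nonempty_iff_ne_empty]
    simpa using hp
  obtain ⟨m, hm, he⟩ := Finset.exists_mem_eq_sup p.support h (fun s => s.sum fun _ e => e)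
  exact ⟨m, hm, by rw [← degree_sum_eq]; exact he.symm⟩

lemma topComponent_ne_zero {R : Type*} [CommSemiring R] {p : MvPolynomial σ R} (hp : p ≠ 0) :
    homogeneousComponent p.totalDegree p ≠ 0 := by
  obtain ⟨m, hm, he⟩ := exists_top hp
  intro h
  have h2 := coeff_homogeneousComponent (σ := σ) (R := R) p.totalDegree p m
  rw [h, coeff_zero, if_pos he] at h2
  exact (mem_support_iff.mp hm) h2.symm

lemma hc_mul {R : Type*} [CommSemiring R] (a b : MvPolynomial σ R) :
    homogeneousComponent (a.totalDegree + b.totalDegree) (a * b)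
      = homogeneousComponent a.totalDegree a * homogeneousComponent b.totalDegree b := by
  classical
  ext m
  rw [coeff_homogeneousComponent, coeff_mul, coeff_mul]
  by_cases h : m.degree = a.totalDegree + b.totalDegree
  · rw [if_pos h]
    apply Finset.sum_congr rfl
    rintro ⟨u, v⟩ huv
    have huv' : u + v = m := Finset.HasAntidiagonal.mem_antidiagonal.mp huv
    have hdeg : u.degree + v.degree = a.totalDegree + b.totalDegree := by
      rw [← h, ← huv', degree_add]
    rw [coeff_homogeneousComponent, coeff_homogeneousComponent]
    by_cases hu : u.degree = a.totalDegree
    · have hv : v.degree = b.totalDegree := by omega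
      rw [if_pos hu, if_pos hv]
    · rcases lt_or_gt_of_ne hu with hlt | hgt
      · have hv : b.totalDegree < v.degree := by omega
        rw [coeff_eq_zero_of_lt hv, if_neg hu]
        simp
      · rw [coeff_eq_zero_of_lt hgt, if_neg hu]
        simp
  · rw [if_neg h]
    symm
    apply Finset.sum_eq_zero
    rintro ⟨u, v⟩ huv
    have huv' : u + v = m := Finset.HasAntidiagonal.mem_antidiagonal.mp huv
    rw [coeff_homogeneousComponent, coeff_homogeneousComponent]
    by_cases hu : u.degree = a.totalDegree
    · by_cases hv : v.degree = b.totalDegree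
      · exfalso
        apply h
        rw [← huv', degree_add, hu, hv]
      · rw [if_neg hv]
        simp
    · rw [if_neg hu]
      simp

lemma totalDegree_le_of_dvd {K : Type*} [CommRing K] [IsDomain K] {p q : MvPolynomial σ K}
    (h : p ∣ q) (hq : q ≠ 0) : p.totalDegree ≤ q.totalDegree := by
  obtain ⟨r, rfl⟩ := h
  have hp : p ≠ 0 := fun h0 => hq (by rw [h0, zero_mul])
  have hr : r ≠ 0 := fun h0 => hq (by rw [h0, mul_zero])
  have key : homogeneousComponent (p.totalDegree + r.totalDegree) (p * r) ≠ 0 := by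
    rw [hc_mul]
    exact mul_ne_zero (topComponent_ne_zero hp) (topComponent_ne_zero hr)
  by_contra hcon
  push_neg at hcon
  have : (p * r).totalDegree < p.totalDegree + r.totalDegree := by omega
  exact key (homogeneousComponent_eq_zero _ _ this)

lemma eq_C_of_totalDegree_eq_zero {R : Type*} [CommSemiring R] {p : MvPolynomial σ R}
    (h : p.totalDegree = 0) : p = C (coeff 0 p) := by
  have h0 : p ∈ homogeneousSubmodule σ R 0 :=
    (mem_homogeneousSubmodule _ _).mpr (isHomogeneous_of_totalDegree_zero σ h)
  have h2 := homogeneousComponent_of_mem (m := 0) h0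
  rw [if_pos rfl] at h2
  conv_lhs => rw [← h2]
  rw [homogeneousComponent_zero]

lemma totalDegree_eq_zero_of_isUnit {K : Type*} [CommRing K] [IsDomain K]
    {p : MvPolynomial σ K} (h : IsUnit p) : p.totalDegree = 0 := by
  obtain ⟨v, hv⟩ := h.exists_right_inv
  have hp0 : p ≠ 0 := fun h0 => by simp [h0] at hv
  have hv0 : v ≠ 0 := fun h0 => by simp [h0] at hv
  by_contra hne
  have hone : (1 : MvPolynomial σ K) ∈ homogeneousSubmodule σ K 0 :=
    (mem_homogeneousSubmodule _ _).mpr (isHomogeneous_one σ K)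
  have h2 := homogeneousComponent_of_mem (m := p.totalDegree + v.totalDegree) hone
  rw [if_neg (by omega)] at h2
  have h3 := hc_mul p v
  rw [hv, h2] at h3
  exact mul_ne_zero (topComponent_ne_zero hp0) (topComponent_ne_zero hv0) h3.symm

lemma exists_homogeneous_factors {K : Type*} [Field K] {p : MvPolynomial σ K} {d : ℕ}
    (hp : p.IsHomogeneous d) (hp0 : p ≠ 0) (hnu : ¬ IsUnit p) (hni : ¬ Irreducible p) :
    ∃ (A B : MvPolynomial σ K) (da db : ℕ), p = A * B ∧ A.IsHomogeneous da ∧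
      B.IsHomogeneous db ∧ da + db = d ∧ 1 ≤ da ∧ 1 ≤ db := by
  rw [irreducible_iff] at hni
  push_neg at hni
  obtain ⟨a, b, heq, ha, hb⟩ := hni hnu
  have ha0 : a ≠ 0 := fun h0 => hp0 (by rw [heq, h0, zero_mul])
  have hb0 : b ≠ 0 := fun h0 => hp0 (by rw [heq, h0, mul_zero])
  set A := homogeneousComponent a.totalDegree a with hA
  set B := homogeneousComponent b.totalDegree b with hB
  have hA0 : A ≠ 0 := topComponent_ne_zero ha0
  have hB0 : B ≠ 0 := topComponent_ne_zero hb0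
  have hAB : homogeneousComponent (a.totalDegree + b.totalDegree) p = A * B := by
    rw [heq]; exact hc_mul a b
  have hpmem : p ∈ homogeneousSubmodule σ K d := (mem_homogeneousSubmodule _ _).mpr hp
  have hd : a.totalDegree + b.totalDegree = d := by
    by_contra hne
    have h2 := homogeneousComponent_of_mem (m := a.totalDegree + b.totalDegree) hpmem
    rw [if_neg hne] at h2
    rw [h2] at hAB
    exact mul_ne_zero hA0 hB0 hAB.symm
  have hpAB : p = A * B := by
    have h2 := homogeneousComponent_of_mem (m := a.totalDegree + b.totalDegree) hpmem
    rw [if_pos hd] at h2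
    rw [← h2, hAB]
  have hta : 1 ≤ a.totalDegree := by
    by_contra hc
    push_neg at hc
    interval_cases h : a.totalDegree
    · have := eq_C_of_totalDegree_eq_zero h
      apply ha
      rw [this]
      exact (isUnit_iff_ne_zero.mpr (fun h0 => ha0 (by rw [this, h0, map_zero]))).map
        (C : K →+* MvPolynomial σ K)
  have htb : 1 ≤ b.totalDegree := by
    by_contra hc
    push_neg at hc
    interval_cases h : b.totalDegree
    · have := eq_C_of_totalDegree_eq_zero h
      apply hb
      rw [this]
      exact (isUnit_iff_ne_zero.mpr (fun h0 => hb0 (by rw [this, h0, map_zero]))).map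
        (C : K →+* MvPolynomial σ K)
  exact ⟨A, B, a.totalDegree, b.totalDegree, hpAB,
    homogeneousComponent_isHomogeneous _ _, homogeneousComponent_isHomogeneous _ _,
    hd, hta, htb⟩

section Phi

variable {K : Type*} [Field K] [Algebra ℚ K]

/-- Apply a `ℚ`-linear functional to the coefficients of a polynomial over `K`. -/
noncomputable def phiMap (φ : K →ₗ[ℚ] ℚ) (p : MvPolynomial σ K) : MvPolynomial σ ℚ :=
  ∑ m ∈ p.support, monomial m (φ (coeff m p))

lemma coeff_phiMap (φ : K →ₗ[ℚ] ℚ) (p : MvPolynomial σ K) (m : σ →₀ ℕ) :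
    coeff m (phiMap φ p) = φ (coeff m p) := by
  classical
  rw [phiMap, coeff_sum]
  simp only [coeff_monomial]
  rw [Finset.sum_ite_eq' p.support m (fun m' => φ (coeff m' p))]
  by_cases h : m ∈ p.support
  · rw [if_pos h]
  · rw [if_neg h]
    rw [notMem_support_iff] at h
    rw [h, map_zero]

lemma phiMap_isHomogeneous (φ : K →ₗ[ℚ] ℚ) {p : MvPolynomial σ K} {n : ℕ}
    (h : p.IsHomogeneous n) : (phiMap φ p).IsHomogeneous n := by
  intro m hm
  rw [coeff_phiMap] at hm
  exact h (fun hc => hm (by rw [hc, map_zero]))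

lemma eval_phiMap (φ : K →ₗ[ℚ] ℚ) (p : MvPolynomial σ K) (x : σ → ℚ) :
    eval x (phiMap φ p) = φ (eval (fun i => algebraMap ℚ K (x i)) p) := by
  rw [phiMap, map_sum, eval_eq (fun i => algebraMap ℚ K (x i)) p, map_sum]
  apply Finset.sum_congr rfl
  intro m _
  rw [eval_monomial]
  have hprod : (∏ i ∈ m.support, (algebraMap ℚ K (x i)) ^ m i)
      = algebraMap ℚ K (∏ i ∈ m.support, (x i) ^ m i) := by
    rw [map_prod]
    simp [map_pow]
  have hsm : coeff m p * (∏ i ∈ m.support, (algebraMap ℚ K (x i)) ^ m i)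
      = (∏ i ∈ m.support, (x i) ^ m i) • coeff m p := by
    rw [hprod, Algebra.smul_def, mul_comm]
  rw [hsm, map_smul, smul_eq_mul]
  rw [Finsupp.prod]
  ring

lemma exists_phi {c : K} (hc : c ≠ 0) : ∃ φ : K →ₗ[ℚ] ℚ, φ c ≠ 0 := by
  obtain ⟨i, hi⟩ : ∃ i, (Module.Basis.ofVectorSpace ℚ K).repr c i ≠ 0 := by
    by_contra h
    push_neg at h
    apply hc
    have : (Module.Basis.ofVectorSpace ℚ K).repr c = 0 := by
      ext i; exact h i
    simpa using congrArg (Module.Basis.ofVectorSpace ℚ K).repr.symm this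
  exact ⟨(Module.Basis.ofVectorSpace ℚ K).coord i, by rwa [Module.Basis.coord_apply]⟩

end Phi

lemma exists_int_scale (q : MvPolynomial σ ℚ) :
    ∃ (g : MvPolynomial σ ℤ) (N : ℤ), N ≠ 0 ∧
      g.map (Int.castRingHom ℚ) = C (N : ℚ) * q := by
  classical
  set N : ℤ := ∏ m ∈ q.support, ((coeff m q).den : ℤ) with hN
  have hNden : ∀ m ∈ q.support, ((coeff m q).den : ℤ) ∣ N :=
    fun m hm => Finset.dvd_prod_of_mem _ hm
  have hN0 : N ≠ 0 := Finset.prod_ne_zero_iff.mpr fun m _ => by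
    exact_mod_cast (coeff m q).den_nz
  refine ⟨∑ m ∈ q.support, monomial m ((N / ((coeff m q).den : ℤ)) * (coeff m q).num),
    N, hN0, ?_⟩
  ext m
  rw [coeff_map, coeff_C_mul]
  rw [coeff_sum]
  simp only [coeff_monomial]
  rw [Finset.sum_ite_eq' q.support m
    (fun m' => ((N / ((coeff m' q).den : ℤ)) * (coeff m' q).num))]
  by_cases h : m ∈ q.support
  · rw [if_pos h]
    set c := coeff m q with hc
    obtain ⟨k, hk⟩ := hNden m h
    have hdne : ((c.den : ℤ) : ℚ) ≠ 0 := by exact_mod_cast c.den_nz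
    have hdenne : (c.den : ℤ) ≠ 0 := by exact_mod_cast c.den_nz
    rw [hk, Int.mul_ediv_cancel_left _ hdenne]
    have hden : (c : ℚ) * ((c.den : ℤ) : ℚ) = (c.num : ℚ) := by
      push_cast
      rw [mul_comm]
      exact Rat.den_mul_eq_num c
    simp only [eq_intCast]
    push_cast
    linear_combination (-(k : ℚ)) * hden
  · rw [if_neg h]
    rw [notMem_support_iff] at h
    rw [h, mul_zero]
    simp

lemma eval_algebraMap_map {R S : Type*} [CommSemiring R] [CommSemiring S] (g : R →+* S)
    (x : σ → R) (p : MvPolynomial σ R) :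
    eval (fun i => g (x i)) (map g p) = g (eval x p) := by
  rw [eval_map]
  have h1 : eval x p = eval₂ (RingHom.id R) x p := rfl
  rw [h1, eval₂_comp_left g (RingHom.id R) x p, RingHom.comp_id]
  rfl

end Stmt6Aux

open Stmt6Aux

theorem stmt_6 (n d : ℕ) (f : MvPolynomial (Fin (n + 2)) ℤ)
    (hf : f.IsHomogeneous d)
    (hirr : Irreducible (f.map (Int.castRingHom ℚ)))
    (hred : ¬ Irreducible (f.map (Int.castRingHom (AlgebraicClosure ℚ)))) :
    ∃ (g : MvPolynomial (Fin (n + 2)) ℤ) (e : ℕ), e ≤ d ∧ g.IsHomogeneous e ∧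
      ¬ f ∣ g ∧
      ∀ x : Fin (n + 2) → ℚ, eval x (f.map (Int.castRingHom ℚ)) = 0 →
        eval x (g.map (Int.castRingHom ℚ)) = 0 := by
  classical
  set K := AlgebraicClosure ℚ
  set fQ := f.map (Int.castRingHom ℚ) with hfQ
  set fK := f.map (Int.castRingHom K) with hfK
  -- basic facts
  have hfQ0 : fQ ≠ 0 := hirr.ne_zero
  have hf0 : f ≠ 0 := fun h0 => hfQ0 (by rw [hfQ, h0, map_zero])
  have hfK0 : fK ≠ 0 := by
    intro h0
    apply hf0
    have hinj : Function.Injective (Int.castRingHom K) :=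
      fun a b hab => by simpa using hab
    apply MvPolynomial.map_injective (Int.castRingHom K) hinj
    rw [map_zero]
    exact h0
  have hfKhom : fK.IsHomogeneous d := hf.map _
  have hfQhom : fQ.IsHomogeneous d := hf.map _
  have hd0 : d ≠ 0 := by
    intro hd
    subst hd
    have htd : fQ.totalDegree = 0 := Nat.le_zero.mp (hfQhom.totalDegree_le)
    have := eq_C_of_totalDegree_eq_zero htd
    rcases eq_or_ne (coeff 0 fQ) 0 with h | h
    · rw [h, map_zero] at this
      exact hfQ0 this
    · exact hirr.not_isUnit (by
        rw [this]
        exact (isUnit_iff_ne_zero.mpr h).map (C : ℚ →+* MvPolynomial (Fin (n + 2)) ℚ))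
  have hfKnu : ¬ IsUnit fK := by
    intro hu
    have := totalDegree_eq_zero_of_isUnit hu
    rw [hfKhom.totalDegree hfK0] at this
    exact hd0 this
  -- factor fK into homogeneous pieces
  obtain ⟨A, B, da, db, hABeq, hAhom, hBhom, hdadb, hda, hdb⟩ :=
    exists_homogeneous_factors hfKhom hfK0 hfKnu hred
  have hA0 : A ≠ 0 := fun h0 => hfK0 (by rw [hABeq, h0, zero_mul])
  have hB0 : B ≠ 0 := fun h0 => hfK0 (by rw [hABeq, h0, mul_zero])
  -- pick functionals
  obtain ⟨mA, hmA⟩ := exists_coeff_ne_zero hA0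
  obtain ⟨mB, hmB⟩ := exists_coeff_ne_zero hB0
  obtain ⟨φA, hφA⟩ := exists_phi hmA
  obtain ⟨φB, hφB⟩ := exists_phi hmB
  set aQ := phiMap φA A with haQ
  set bQ := phiMap φB B with hbQ
  have haQ0 : aQ ≠ 0 := fun h0 => hφA (by
    rw [← coeff_phiMap φA A mA, ← haQ, h0, coeff_zero])
  have hbQ0 : bQ ≠ 0 := fun h0 => hφB (by
    rw [← coeff_phiMap φB B mB, ← hbQ, h0, coeff_zero])
  have haQhom : aQ.IsHomogeneous da := phiMap_isHomogeneous φA hAhom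
  have hbQhom : bQ.IsHomogeneous db := phiMap_isHomogeneous φB hBhom
  set q : MvPolynomial (Fin (n + 2)) ℚ := aQ * bQ with hq
  have hq0 : q ≠ 0 := mul_ne_zero haQ0 hbQ0
  have hqhom : q.IsHomogeneous d := hdadb ▸ haQhom.mul hbQhom
  -- clear denominators
  obtain ⟨g, N, hN0, hgmap⟩ := exists_int_scale q
  refine ⟨g, d, le_rfl, ?_, ?_, ?_⟩
  · -- g homogeneous of degree d
    intro m hm
    have hmm : coeff m (g.map (Int.castRingHom ℚ)) ≠ 0 := by
      rw [coeff_map]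
      simpa using hm
    rw [hgmap, coeff_C_mul] at hmm
    have : coeff m q ≠ 0 := fun h0 => hmm (by rw [h0, mul_zero])
    exact hqhom this
  · -- f does not divide g
    intro hdvd
    have hdvdQ : fQ ∣ g.map (Int.castRingHom ℚ) :=
      _root_.map_dvd (MvPolynomial.map (Int.castRingHom ℚ)) hdvd
    rw [hgmap] at hdvdQ
    have hprime : Prime fQ := hirr.prime
    have hCN : ¬ fQ ∣ C (N : ℚ) := by
      intro hc
      have hCN0 : (C (N : ℚ) : MvPolynomial (Fin (n + 2)) ℚ) ≠ 0 := by
        simp only [ne_eq, map_eq_zero]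
        exact_mod_cast hN0
      have := totalDegree_le_of_dvd hc hCN0
      rw [hfQhom.totalDegree hfQ0, totalDegree_C] at this
      omega
    rcases hprime.2.2 _ _ hdvdQ with hc | hc
    · exact hCN hc
    · rcases hprime.2.2 _ _ hc with hc2 | hc2
      · have := totalDegree_le_of_dvd hc2 haQ0
        rw [hfQhom.totalDegree hfQ0, haQhom.totalDegree haQ0] at this
        omega
      · have := totalDegree_le_of_dvd hc2 hbQ0
        rw [hfQhom.totalDegree hfQ0, hbQhom.totalDegree hbQ0] at this
        omega
  · -- vanishing
    intro x hx
    have hmapcomp : fK = fQ.map (algebraMap ℚ K) := by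
      rw [hfK, hfQ, map_map]
      congr 1
    have hevalK : eval (fun i => algebraMap ℚ K (x i)) fK = 0 := by
      rw [hmapcomp, eval_algebraMap_map, hx, map_zero]
    rw [hABeq] at hevalK
    rw [map_mul] at hevalK
    have hzero : eval x aQ = 0 ∨ eval x bQ = 0 := by
      rcases mul_eq_zero.mp hevalK with h | h
      · left
        rw [haQ, eval_phiMap, h, map_zero]
      · right
        rw [hbQ, eval_phiMap, h, map_zero]
    rw [hgmap, map_mul, eval_C]
    have : eval x q = 0 := by
      rw [hq, map_mul]
      rcases hzero with h | h
      · rw [h, zero_mul]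
      · rw [h, mul_zero]
    simp [this]
end

section
/- Let f ∈ ℤ[x_0, ..., x_{n+1}] be homogeneous of degree d with nonzero coefficient c_f of the monomial x_{n+1}^d, and let P = f·h for some nonzero homogeneous h ∈ ℤ[x_0, ..., x_{n+1}] of degree M − d. Then ‖P‖ ≥ |c_f|, where ‖P‖ denotes the maximum absolute value of the coefficients of P. -/
open MvPolynomial

/-- The "reverse lex" key: compare exponents of the last variable first. -/
noncomputable def revKey (n : ℕ) (a : Fin (n + 2) →₀ ℕ) : Lex (Fin (n + 2) →₀ ℕ) :=
  toLex (Finsupp.domCongr (Fin.revPerm) a)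

lemma revKey_add (n : ℕ) (a b : Fin (n + 2) →₀ ℕ) :
    revKey n (a + b) = revKey n a + revKey n b := by
  simp [revKey, map_add]

lemma revKey_apply (n : ℕ) (a : Fin (n + 2) →₀ ℕ) (i : Fin (n + 2)) :
    ofLex (revKey n a) i = a i.rev := by
  simp [revKey, Finsupp.domCongr_apply, Finsupp.equivMapDomain_apply]

/-- Among exponent vectors of total degree `d`, `single last d` is the strict max
for the reverse lex key. -/
lemma revKey_lt_single (n d : ℕ) (a : Fin (n + 2) →₀ ℕ) (hdeg : a.degree = d)
    (hne : a ≠ Finsupp.single (Fin.last (n + 1)) d) :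
    revKey n a < revKey n (Finsupp.single (Fin.last (n + 1)) d) := by
  have hle : a (Fin.last (n + 1)) ≤ d := hdeg ▸ Finsupp.le_degree _ a
  have hlt : a (Fin.last (n + 1)) < d := by
    rcases lt_or_eq_of_le hle with h' | h'
    · exact h'
    · exfalso
      apply hne
      have h1 : a = Finsupp.single (Fin.last (n + 1)) (a (Fin.last (n + 1)))
          + a.erase (Fin.last (n + 1)) := (Finsupp.single_add_erase _ a).symm
      have hadd : ∀ x y : Fin (n + 2) →₀ ℕ, (x + y).degree = x.degree + y.degree := by
        intro x y
        simp [Finsupp.degree_eq_weight_one, map_add]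
      have h2 : (a.erase (Fin.last (n + 1))).degree = 0 := by
        have := hadd (Finsupp.single (Fin.last (n + 1)) (a (Fin.last (n + 1))))
          (a.erase (Fin.last (n + 1)))
        rw [← h1, hdeg] at this
        have hs : (Finsupp.single (Fin.last (n + 1)) (a (Fin.last (n + 1)))).degree
            = a (Fin.last (n + 1)) := by
          simp [Finsupp.degree_eq_weight_one, Finsupp.weight_apply, Finsupp.sum_single_index]
        omega
      rw [Finsupp.degree_eq_zero_iff] at h2
      rw [h1, h2, add_zero, h']
  rw [Finsupp.Lex.lt_iff]
  refine ⟨0, fun j hj => absurd hj (by simp [Fin.not_lt_zero]) , ?_⟩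
  rw [revKey_apply, revKey_apply]
  simpa [Fin.rev_zero] using hlt

set_option maxHeartbeats 1000000 in
theorem stmt_9 (n d M : ℕ) (hd : 0 < d) (hM : d ≤ M)
    (f h : MvPolynomial (Fin (n + 2)) ℤ)
    (hf : f.IsHomogeneous d)
    (hcf : f.coeff (Finsupp.single (Fin.last (n + 1)) d) ≠ 0)
    (hh : h.IsHomogeneous (M - d)) (hh0 : h ≠ 0)
    (P : MvPolynomial (Fin (n + 2)) ℤ) (hP : P = f * h) :
    ∃ m : Fin (n + 2) →₀ ℕ,
      |f.coeff (Finsupp.single (Fin.last (n + 1)) d)| ≤ |P.coeff m| := by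
  set A : Fin (n + 2) →₀ ℕ := Finsupp.single (Fin.last (n + 1)) d with hA
  obtain ⟨B, hB, hBmax⟩ := h.support.exists_max_image (revKey n)
    (support_nonempty.mpr hh0)
  refine ⟨A + B, ?_⟩
  have hcoeff : P.coeff (A + B) = f.coeff A * h.coeff B := by
    rw [hP, coeff_mul]
    refine Finset.sum_eq_single (A, B) ?_ ?_
    · rintro ⟨a, b⟩ hab hne
      rw [Finset.HasAntidiagonal.mem_antidiagonal] at hab
      dsimp only at hab hne ⊢
      by_contra hzero
      have hfa : f.coeff a ≠ 0 := fun h' => hzero (by simp [h'])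
      have hhb : h.coeff b ≠ 0 := fun h' => hzero (by simp [h'])
      have hadeg : a.degree = d := by
        have := hf hfa
        rw [Finsupp.degree_eq_weight_one]; exact this
      have haA : a ≠ A := by
        rintro rfl
        exact hne (by rw [add_left_cancel hab])
      have h1 : revKey n a < revKey n A := revKey_lt_single n d a hadeg haA
      have h2 : revKey n b ≤ revKey n B := hBmax b (by rwa [mem_support_iff])
      have : revKey n (a + b) < revKey n (A + B) := by
        rw [revKey_add, revKey_add]
        exact add_lt_add_of_lt_of_le h1 h2
      rw [hab] at this
      exact lt_irrefl _ this
    · intro hmem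
      rw [Finset.HasAntidiagonal.mem_antidiagonal] at hmem
      exact absurd rfl hmem
  rw [hcoeff, abs_mul]
  have hbpos : 1 ≤ |h.coeff B| := by
    rw [mem_support_iff] at hB
    exact Int.one_le_abs hB
  exact le_mul_of_one_le_right (abs_nonneg _) hbpos
end

section
/- There exists an absolute constant C such that for all x ≥ 2, |Σ_{p ≤ x} (log p)/p − log x| ≤ C, where the sum is over primes p ≤ x. -/
open Finset

lemma log_factorial_le (n : ℕ) : Real.log n.factorial ≤ n * Real.log n := by
  induction n with
  | zero => simp
  | succ n ih =>
    rw [Nat.factorial_succ]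
    push_cast
    rw [Real.log_mul (by positivity) (by exact_mod_cast n.factorial_pos.ne')]
    have h1 : Real.log n ≤ Real.log (n+1) := by
      rcases Nat.eq_zero_or_pos n with h | h
      · simp [h]
      · exact Real.log_le_log (by positivity) (by linarith)
    have h2 : (0:ℝ) ≤ Real.log (n+1) := Real.log_nonneg (by push_cast; linarith)
    nlinarith [ih]

lemma le_log_factorial (n : ℕ) (hn : 1 ≤ n) : (n:ℝ) * Real.log n - n ≤ Real.log n.factorial := by
  induction n with
  | zero => simp
  | succ n ih =>
    rcases Nat.eq_zero_or_pos n with h | h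
    · subst h; simp
    · have ih' := ih h
      rw [Nat.factorial_succ]
      push_cast
      rw [Real.log_mul (by positivity) (by exact_mod_cast n.factorial_pos.ne')]
      have hn0 : (0:ℝ) < n := by exact_mod_cast h
      have key : (n:ℝ) * Real.log ((n:ℝ)+1) - n * Real.log n ≤ 1 := by
        have : Real.log (((n:ℝ)+1)/n) ≤ ((n:ℝ)+1)/n - 1 :=
          Real.log_le_sub_one_of_pos (by positivity)
        rw [Real.log_div (by positivity) (by positivity)] at this
        have h2 : ((n:ℝ)+1)/n - 1 = 1/n := by field_simp; ring
        rw [h2] at this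
        have := mul_le_mul_of_nonneg_left this hn0.le
        calc (n:ℝ) * Real.log ((n:ℝ)+1) - n * Real.log n
            = n * (Real.log ((n:ℝ)+1) - Real.log n) := by ring
          _ ≤ n * (1/n) := by nlinarith
          _ = 1 := by field_simp
      linarith
open Finset

lemma geom_bound (r : ℝ) (h0 : 0 ≤ r) (h1 : r ≤ 1/2) (n : ℕ) :
    ∑ i ∈ Ico 1 n, r ^ i ≤ r + 2 * r^2 := by
  have hpos : 0 < 1 - r := by linarith
  have hs : ∑ i ∈ range n, r ^ i ≤ (1-r)⁻¹ := by
    have h := mul_neg_geom_sum r n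
    have hS : ∑ i ∈ range n, r ^ i = (1 - r^n)/(1-r) := by
      field_simp; linarith [h]
    rw [hS, inv_eq_one_div]
    gcongr <;> nlinarith [pow_nonneg h0 n]
  rcases Nat.eq_zero_or_pos n with h|h
  · subst h; simp; positivity
  · have hsplit : ∑ i ∈ range n, r ^ i = 1 + ∑ i ∈ Ico 1 n, r ^ i := by
      rw [range_eq_Ico, Finset.sum_eq_sum_Ico_succ_bot h]
      norm_num
    have h2 : ∑ i ∈ Ico 1 n, r ^ i ≤ (1-r)⁻¹ - 1 := by
      rw [hsplit] at hs; linarith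
    have h3 : (1-r)⁻¹ - 1 ≤ r + 2*r^2 := by
      rw [inv_eq_one_div, div_sub' hpos.ne', div_le_iff₀ hpos]
      nlinarith
    linarith

lemma sum_inv_msqrt : ∀ n : ℕ, 1 ≤ n →
    ∑ m ∈ Icc 2 n, 1 / ((m:ℝ) * Real.sqrt m) ≤ 2 - 2 / Real.sqrt n := by
  intro n hn
  induction n with
  | zero => simp
  | succ n ih =>
    rcases Nat.eq_zero_or_pos n with h|h
    · subst h; norm_num
    · rw [Finset.sum_Icc_succ_top (by omega)]
      have ihn := ih h
      have key : 1 / (((n:ℝ)+1) * Real.sqrt ((n:ℝ)+1)) ≤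
          2 / Real.sqrt n - 2 / Real.sqrt ((n:ℝ)+1) := by
        set a := Real.sqrt n with ha
        set b := Real.sqrt ((n:ℝ)+1) with hb
        have ha2 : a^2 = n := Real.sq_sqrt (by positivity)
        have hb2 : b^2 = (n:ℝ)+1 := Real.sq_sqrt (by positivity)
        have ha0 : 0 < a := Real.sqrt_pos.mpr (by exact_mod_cast h)
        have hb0 : 0 < b := Real.sqrt_pos.mpr (by positivity)
        have hab : a ≤ b := Real.sqrt_le_sqrt (by linarith)
        have hsub : (b - a) * (b + a) = 1 := by nlinarith
        have hba : b - a = 1/(b+a) := by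
          rw [eq_div_iff (by positivity)]; exact hsub
        have e1 : 2 / a - 2 / b = 2*(b-a)/(a*b) := by
          field_simp
        have e2 : ((n:ℝ)+1) * b = b^2*b := by rw [hb2]
        rw [e1, hba, e2]
        have e3 : 2*(1/(b+a))/(a*b) = 2/((b+a)*(a*b)) := by
          field_simp
        rw [e3, div_le_div_iff₀ (by positivity) (by positivity)]
        nlinarith [mul_nonneg (sub_nonneg.2 hab) (by positivity : (0:ℝ) ≤ b^2 + a*b + b^2)]
      push_cast
      linarith
open Finset

lemma Iic_eq_range (n : ℕ) : Finset.Iic n = Finset.range (n+1) := by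
  ext m; simp [Nat.lt_succ_iff]

lemma primeFactors_factorial (n : ℕ) (hn : 1 ≤ n) :
    (Nat.factorial n).primeFactors = (Finset.Iic n).filter Nat.Prime := by
  ext p
  simp only [Nat.mem_primeFactors, mem_filter, Finset.mem_Iic]
  constructor
  · rintro ⟨hp, hdvd, -⟩
    exact ⟨(Nat.Prime.dvd_factorial hp).mp hdvd, hp⟩
  · rintro ⟨hle, hp⟩
    exact ⟨hp, (Nat.Prime.dvd_factorial hp).mpr hle, n.factorial_ne_zero⟩

lemma log_fact_eq (n : ℕ) (hn : 1 ≤ n) :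
    Real.log (Nat.factorial n) = ∑ p ∈ (Finset.Iic n).filter Nat.Prime,
      ((Nat.factorial n).factorization p : ℝ) * Real.log p := by
  conv_lhs => rw [← Nat.factorization_prod_pow_eq_self n.factorial_ne_zero]
  rw [Nat.prod_factorization_eq_prod_primeFactors]
  push_cast
  rw [Real.log_prod]
  · rw [primeFactors_factorial n hn]
    refine Finset.sum_congr rfl fun p hp => ?_
    rw [Real.log_pow]
  · intro p hp
    have hp' := Nat.prime_of_mem_primeFactors hp
    have : (0:ℝ) < p := by exact_mod_cast hp'.pos
    positivity

lemma theta_le (n : ℕ) :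
    ∑ p ∈ (Finset.Iic n).filter Nat.Prime, Real.log p ≤ n * Real.log 4 := by
  have h1 : ∑ p ∈ (Finset.Iic n).filter Nat.Prime, Real.log p
      = Real.log (primorial n) := by
    rw [primorial, ← Iic_eq_range]
    push_cast
    rw [Real.log_prod]
    intro p hp
    have h2 := (mem_filter.mp hp).2
    have : (0:ℝ) < p := by exact_mod_cast h2.pos
    positivity
  rw [h1]
  calc Real.log (primorial n) ≤ Real.log (4^n) := by
        apply Real.log_le_log (by exact_mod_cast (primorial_pos n))
        exact_mod_cast primorial_le_4_pow n
    _ = n * Real.log 4 := by push_cast; rw [Real.log_pow]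
open Finset

lemma nu_eq (n p : ℕ) (hn : 2 ≤ n) (hp : p.Prime) :
    (Nat.factorial n).factorization p = ∑ i ∈ Ico 1 n, n / p ^ i := by
  haveI : Fact p.Prime := ⟨hp⟩
  rw [Nat.factorization_def _ hp]
  exact padicValNat_factorial (Nat.log_lt_self p (by omega))

lemma nu_lower (n p : ℕ) (hn : 2 ≤ n) (hp : p.Prime) :
    (n:ℝ)/p - 1 ≤ ((Nat.factorial n).factorization p : ℝ) := by
  rw [nu_eq n p hn hp]
  have h1 : n / p ≤ ∑ i ∈ Ico 1 n, n / p ^ i := by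
    have : n / p = n / p ^ 1 := by norm_num
    rw [this]
    exact Finset.single_le_sum (f := fun i => n / p ^ i) (fun i _ => Nat.zero_le _)
      (by simp; omega)
  have h2 : (n:ℝ)/p - 1 ≤ ((n / p : ℕ) : ℝ) := by
    have hmod : n % p < p := Nat.mod_lt _ hp.pos
    have hdm : p * (n / p) + n % p = n := Nat.div_add_mod n p
    have hp0 : (0:ℝ) < p := by exact_mod_cast hp.pos
    have : (p:ℝ) * ((n/p : ℕ):ℝ) + ((n % p : ℕ):ℝ) = n := by exact_mod_cast hdm
    have hmod' : ((n % p : ℕ):ℝ) < p := by exact_mod_cast hmod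
    rw [div_sub' hp0.ne', div_le_iff₀ hp0]
    nlinarith
  calc (n:ℝ)/p - 1 ≤ ((n / p : ℕ) : ℝ) := h2
    _ ≤ _ := by exact_mod_cast h1

lemma nu_upper (n p : ℕ) (hn : 2 ≤ n) (hp : p.Prime) :
    ((Nat.factorial n).factorization p : ℝ) ≤ (n:ℝ)/p + 2*n/p^2 := by
  rw [nu_eq n p hn hp]
  push_cast
  have hp0 : (0:ℝ) < p := by exact_mod_cast hp.pos
  have hp2 : (2:ℝ) ≤ p := by exact_mod_cast hp.two_le
  have step : ∀ i ∈ Ico 1 n, ((n / p ^ i : ℕ) : ℝ) ≤ (n:ℝ) * (1/(p:ℝ))^i := by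
    intro i _
    calc ((n / p ^ i : ℕ) : ℝ) ≤ (n:ℝ) / (p:ℝ)^i := by
          push_cast [Nat.cast_div_le]
          exact_mod_cast Nat.cast_div_le
      _ = (n:ℝ) * (1/(p:ℝ))^i := by rw [div_pow, one_pow]; ring
  calc (∑ i ∈ Ico 1 n, ((n / p ^ i : ℕ) : ℝ))
      ≤ ∑ i ∈ Ico 1 n, (n:ℝ) * (1/(p:ℝ))^i := Finset.sum_le_sum step
    _ = (n:ℝ) * ∑ i ∈ Ico 1 n, (1/(p:ℝ))^i := by rw [Finset.mul_sum]
    _ ≤ (n:ℝ) * ((1/(p:ℝ)) + 2 * (1/(p:ℝ))^2) := by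
        apply mul_le_mul_of_nonneg_left _ (by positivity)
        apply geom_bound _ (by positivity)
        rw [div_le_div_iff₀ hp0 (by norm_num)]
        linarith
    _ = (n:ℝ)/p + 2*n/p^2 := by field_simp
theorem stmt_11 :
    ∃ C : ℝ, ∀ x : ℝ, 2 ≤ x →
      |(∑ p ∈ (Finset.Iic ⌊x⌋₊).filter Nat.Prime, Real.log p / p) - Real.log x| ≤ C := by
  use 10
  intro x hx
  set n := ⌊x⌋₊ with hndef
  have hn2 : 2 ≤ n := Nat.le_floor (by exact_mod_cast hx)
  have hnR : (2:ℝ) ≤ n := by exact_mod_cast hn2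
  have hnpos : (0:ℝ) < n := by linarith
  set P := (Finset.Iic n).filter Nat.Prime with hP
  set S := ∑ p ∈ P, Real.log p / p with hS
  have hmem : ∀ p ∈ P, p.Prime ∧ p ≤ n := by
    intro p hp
    obtain ⟨h1, h2⟩ := Finset.mem_filter.mp hp
    exact ⟨h2, Finset.mem_Iic.mp h1⟩
  have hlogp : ∀ p ∈ P, 0 ≤ Real.log p := by
    intro p hp
    exact Real.log_nonneg (by exact_mod_cast (hmem p hp).1.one_lt.le)
  have hL := log_fact_eq n (by omega)
  -- lower bound on log n!
  have hlow : (n:ℝ) * S - n * Real.log 4 ≤ Real.log n.factorial := by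
    rw [hL]
    have step : ∀ p ∈ P, ((n:ℝ)/p - 1) * Real.log p
        ≤ ((Nat.factorial n).factorization p : ℝ) * Real.log p := by
      intro p hp
      exact mul_le_mul_of_nonneg_right (nu_lower n p hn2 (hmem p hp).1) (hlogp p hp)
    have e : ∑ p ∈ P, ((n:ℝ)/p - 1) * Real.log p
        = (n:ℝ) * S - ∑ p ∈ P, Real.log p := by
      rw [hS, Finset.mul_sum, ← Finset.sum_sub_distrib]
      refine Finset.sum_congr rfl fun p hp => ?_
      have hp0 : (0:ℝ) < p := by exact_mod_cast (hmem p hp).1.pos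
      field_simp
    have := Finset.sum_le_sum step
    rw [e] at this
    have ht := theta_le n
    rw [← hP] at ht
    linarith
  -- upper bound on log n!
  have hupp : Real.log n.factorial ≤ (n:ℝ) * S + 8 * n := by
    rw [hL]
    have step : ∀ p ∈ P, ((Nat.factorial n).factorization p : ℝ) * Real.log p
        ≤ (n:ℝ)/p * Real.log p + 2*n * (2 / ((p:ℝ) * Real.sqrt p)) := by
      intro p hp
      obtain ⟨hpp, hpn⟩ := hmem p hp
      have hp0 : (0:ℝ) < p := by exact_mod_cast hpp.pos
      have hsq : Real.log p ≤ 2 * Real.sqrt p := by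
        have h1 : Real.log ((p:ℝ)) = 2 * Real.log (Real.sqrt p) := by
          rw [Real.log_sqrt hp0.le]; ring
        have h2 : Real.log (Real.sqrt p) ≤ Real.sqrt p - 1 :=
          Real.log_le_sub_one_of_pos (Real.sqrt_pos.mpr hp0)
        nlinarith [Real.sqrt_nonneg (p:ℝ)]
      have hsp : 0 < Real.sqrt p := Real.sqrt_pos.mpr hp0
      calc ((Nat.factorial n).factorization p : ℝ) * Real.log p
          ≤ ((n:ℝ)/p + 2*n/p^2) * Real.log p :=
            mul_le_mul_of_nonneg_right (nu_upper n p hn2 hpp) (hlogp p hp)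
        _ = (n:ℝ)/p * Real.log p + 2*n/p^2 * Real.log p := by ring
        _ ≤ (n:ℝ)/p * Real.log p + 2*n * (2 / ((p:ℝ) * Real.sqrt p)) := by
            have hps : Real.sqrt p * Real.sqrt p = p := Real.mul_self_sqrt hp0.le
            have e6 : (2:ℝ) / ((p:ℝ)*Real.sqrt p) = 2*Real.sqrt p/(p:ℝ)^2 := by
              rw [div_eq_div_iff (by positivity) (by positivity)]
              nlinarith [hps]
            have key : 2*(n:ℝ)/p^2 * Real.log p ≤ 2*n * (2 / ((p:ℝ) * Real.sqrt p)) := by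
              rw [e6]
              have h7 : 2*(n:ℝ)/p^2 * Real.log p ≤ 2*(n:ℝ)/p^2 * (2*Real.sqrt p) :=
                mul_le_mul_of_nonneg_left hsq (by positivity)
              have h8 : 2*(n:ℝ)/p^2 * (2*Real.sqrt p) = 2*n*(2*Real.sqrt p/(p:ℝ)^2) := by
                ring
              linarith [h8 ▸ h7]
            linarith
    calc ∑ p ∈ P, ((Nat.factorial n).factorization p : ℝ) * Real.log p
        ≤ ∑ p ∈ P, ((n:ℝ)/p * Real.log p + 2*n * (2 / ((p:ℝ) * Real.sqrt p))) :=
          Finset.sum_le_sum step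
      _ = (n:ℝ) * S + 4*n * ∑ p ∈ P, 1 / ((p:ℝ) * Real.sqrt p) := by
          rw [Finset.sum_add_distrib, hS, Finset.mul_sum, Finset.mul_sum]
          congr 1
          · refine Finset.sum_congr rfl fun p hp => ?_
            ring
          · refine Finset.sum_congr rfl fun p hp => ?_
            ring
      _ ≤ (n:ℝ) * S + 4*n * 2 := by
          have hsub : P ⊆ Finset.Icc 2 n := by
            intro p hp
            obtain ⟨hpp, hpn⟩ := hmem p hp
            exact Finset.mem_Icc.mpr ⟨hpp.two_le, hpn⟩
          have h1 : ∑ p ∈ P, 1 / ((p:ℝ) * Real.sqrt p)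
              ≤ ∑ m ∈ Finset.Icc 2 n, 1 / ((m:ℝ) * Real.sqrt m) := by
            apply Finset.sum_le_sum_of_subset_of_nonneg hsub
            intro m _ _
            positivity
          have h2 := sum_inv_msqrt n (by omega)
          have h4 : ∑ p ∈ P, 1 / ((p:ℝ) * Real.sqrt p) ≤ 2 := by
            have h5 := div_nonneg (by norm_num : (0:ℝ) ≤ 2) (Real.sqrt_nonneg (n:ℝ))
            linarith
          nlinarith [h4, hnpos]
      _ ≤ (n:ℝ) * S + 8 * n := by linarith
  -- Stirling-type bounds
  have hf1 := le_log_factorial n (by omega)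
  have hf2 := log_factorial_le n
  have hlog4 : Real.log 4 ≤ 2 := by
    have h44 : Real.log 4 = 2 * Real.log 2 := by
      rw [show (4:ℝ) = 2^2 by norm_num, Real.log_pow]; push_cast; ring
    have h2 : Real.log 2 ≤ 1 := by
      linarith [Real.log_le_sub_one_of_pos (by norm_num : (0:ℝ) < 2)]
    linarith
  have hSub : S ≤ Real.log n + 2 := by
    have h2 : (n:ℝ) * S ≤ n * (Real.log n + 2) := by nlinarith
    exact (mul_le_mul_iff_right₀ hnpos).mp h2
  have hSlb : Real.log n - 9 ≤ S := by
    have h2 : (n:ℝ) * (Real.log n - 9) ≤ n * S := by nlinarith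
    exact (mul_le_mul_iff_right₀ hnpos).mp h2
  have hxn : (n:ℝ) ≤ x := Nat.floor_le (by linarith)
  have hxn2 : x < n + 1 := Nat.lt_floor_add_one x
  have hlx1 : Real.log n ≤ Real.log x := Real.log_le_log hnpos hxn
  have hlx2 : Real.log x ≤ Real.log n + 1 := by
    have h1 : Real.log x - Real.log n = Real.log (x / n) :=
      (Real.log_div (by linarith) hnpos.ne').symm
    have h2 : Real.log (x/n) ≤ x/n - 1 := Real.log_le_sub_one_of_pos (by positivity)
    have h3 : x / n ≤ 2 := by rw [div_le_iff₀ hnpos]; linarith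
    linarith
  rw [abs_le]
  constructor <;> linarith
end

section
/- Let P be a finite set of primes and suppose Π_{p ∈ P} p ≤ H^K for some real H ≥ e and constant K ≥ 1. Then Σ_{p ∈ P} (log p)/p ≤ log log H + O_K(1), i.e., there is a constant C depending only on K with Σ_{p ∈ P} (log p)/p ≤ log log H + C. -/
open Finset Real

lemma cheb_aux (n : ℕ) :
    ∑ p ∈ Nat.primesBelow (n + 1), Real.log p ≤ n * Real.log 4 := by
  have h1 : ((primorial n : ℕ) : ℝ) ≤ (4 : ℝ) ^ n := by
    exact_mod_cast primorial_le_4_pow n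
  have hpos : (0 : ℝ) < (primorial n : ℝ) := by exact_mod_cast primorial_pos n
  have h2 : Real.log (primorial n : ℝ) ≤ n * Real.log 4 := by
    calc Real.log (primorial n : ℝ) ≤ Real.log ((4 : ℝ) ^ n) := Real.log_le_log hpos h1
      _ = n * Real.log 4 := by rw [Real.log_pow]
  have h3 : Real.log (primorial n : ℝ) = ∑ p ∈ Nat.primesBelow (n + 1), Real.log p := by
    rw [primorial, Nat.primesBelow]
    push_cast
    rw [Real.log_prod]
    intro p hp
    have := (Finset.mem_filter.mp hp).2
    exact_mod_cast this.pos.ne'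
  linarith [h3 ▸ h2]

lemma legendre_aux (n : ℕ) (hn : 1 ≤ n) :
    ∑ p ∈ Nat.primesBelow (n + 1), ((n / p : ℕ) : ℝ) * Real.log p ≤ n * Real.log n := by
  have hdvd : (∏ p ∈ Nat.primesBelow (n + 1), p ^ (n / p)) ∣ Nat.factorial n := by
    apply Finset.prod_dvd_of_isRelPrime
    · intro p hp q hq hpq
      simp only [Function.onFun]
      exact Nat.coprime_iff_isRelPrime.mp (Nat.Coprime.pow _ _ ((Nat.coprime_primes
        (Nat.prime_of_mem_primesBelow (by simpa using hp))
        (Nat.prime_of_mem_primesBelow (by simpa using hq))).mpr hpq))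
    · intro p hp
      have hpp := Nat.prime_of_mem_primesBelow hp
      rw [Nat.Prime.pow_dvd_factorial_iff hpp (show Nat.log p n < n + 1 from
        Nat.lt_succ_of_le (Nat.log_le_self p n))]
      have h1 : (1 : ℕ) ∈ Finset.Ico 1 (n + 1) := by
        simp [Nat.lt_succ_of_le hn]
      calc n / p = n / p ^ 1 := by rw [pow_one]
        _ ≤ ∑ i ∈ Finset.Ico 1 (n + 1), n / p ^ i :=
            Finset.single_le_sum (f := fun i => n / p ^ i) (fun i _ => Nat.zero_le _) h1
  have hle : (∏ p ∈ Nat.primesBelow (n + 1), p ^ (n / p)) ≤ n ^ n :=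
    le_trans (Nat.le_of_dvd (Nat.factorial_pos n) hdvd) (Nat.factorial_le_pow n)
  have hle' : (∏ p ∈ Nat.primesBelow (n + 1), ((p : ℝ)) ^ (n / p)) ≤ (n : ℝ) ^ n := by
    exact_mod_cast hle
  have hpos : (0 : ℝ) < ∏ p ∈ Nat.primesBelow (n + 1), ((p : ℝ)) ^ (n / p) := by
    apply Finset.prod_pos
    intro p hp
    exact pow_pos (by exact_mod_cast (Nat.prime_of_mem_primesBelow hp).pos) _
  have h := Real.log_le_log hpos hle'
  rw [Real.log_pow] at h
  rw [Real.log_prod] at h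
  · simpa [Real.log_pow] using h
  · intro p hp
    exact (pow_pos (show (0:ℝ) < p by
      exact_mod_cast (Nat.prime_of_mem_primesBelow hp).pos) _).ne'

lemma mertens_aux (n : ℕ) (hn : 1 ≤ n) :
    ∑ p ∈ Nat.primesBelow (n + 1), Real.log p / p ≤ Real.log n + Real.log 4 := by
  have hn0 : (0 : ℝ) < n := by exact_mod_cast hn
  have key : (n : ℝ) * ∑ p ∈ Nat.primesBelow (n + 1), Real.log p / p ≤
      n * Real.log n + n * Real.log 4 := by
    rw [Finset.mul_sum]
    calc ∑ p ∈ Nat.primesBelow (n + 1), (n : ℝ) * (Real.log p / p)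
        ≤ ∑ p ∈ Nat.primesBelow (n + 1), (((n / p : ℕ) : ℝ) * Real.log p + Real.log p) := by
          apply Finset.sum_le_sum
          intro p hp
          have hpp := Nat.prime_of_mem_primesBelow hp
          have hp0 : (0 : ℝ) < p := by exact_mod_cast hpp.pos
          have hlog : 0 ≤ Real.log p := Real.log_natCast_nonneg p
          have hfloor : (n : ℝ) / p ≤ ((n / p : ℕ) : ℝ) + 1 := by
            have := Nat.lt_mul_div_succ n hpp.pos
            have h2 : (n : ℝ) < (p : ℝ) * ((n / p : ℕ) + 1 : ℝ) := by exact_mod_cast this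
            rw [div_le_iff₀ hp0]
            nlinarith
          have : (n : ℝ) * (Real.log p / p) = (n : ℝ) / p * Real.log p := by ring
          rw [this]
          nlinarith [mul_le_mul_of_nonneg_right hfloor hlog]
      _ = (∑ p ∈ Nat.primesBelow (n + 1), ((n / p : ℕ) : ℝ) * Real.log p) +
          ∑ p ∈ Nat.primesBelow (n + 1), Real.log p := Finset.sum_add_distrib
      _ ≤ n * Real.log n + n * Real.log 4 :=
          add_le_add (legendre_aux n hn) (cheb_aux n)
  have := (mul_le_mul_iff_right₀ hn0).mp (by linarith [key] : (n : ℝ) * ∑ p ∈ Nat.primesBelow (n + 1),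
    Real.log p / p ≤ n * (Real.log n + Real.log 4))
  exact this

theorem stmt_13 (K : ℝ) (hK : 1 ≤ K) :
    ∃ C : ℝ, ∀ P : Finset ℕ, (∀ p ∈ P, p.Prime) →
      ∀ H : ℝ, Real.exp 1 ≤ H → (∏ p ∈ P, (p : ℝ)) ≤ H ^ K →
        ∑ p ∈ P, Real.log p / p ≤ Real.log (Real.log H) + C := by
  classical
  refine ⟨Real.log K + Real.log 4 + 1, ?_⟩
  intro P hP H hH hprod
  have hH0 : (0 : ℝ) < H := lt_of_lt_of_le (Real.exp_pos 1) hH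
  set L := Real.log H with hLdef
  have hL : 1 ≤ L := by
    have := Real.log_le_log (Real.exp_pos 1) hH
    rwa [Real.log_exp] at this
  have hK0 : (0 : ℝ) < K := lt_of_lt_of_le one_pos hK
  have hT1 : 1 ≤ K * L := one_le_mul_of_one_le_of_one_le hK hL
  have hT0 : (0 : ℝ) < K * L := lt_of_lt_of_le one_pos hT1
  set n := ⌊K * L⌋₊ with hndef
  have hn1 : 1 ≤ n := Nat.le_floor (by simpa using hT1)
  have hnT : (n : ℝ) ≤ K * L := Nat.floor_le hT0.le
  have hTn : K * L < n + 1 := Nat.lt_floor_add_one _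
  -- total sum of logs is bounded
  have hprodpos : (0 : ℝ) < ∏ p ∈ P, (p : ℝ) := by
    apply Finset.prod_pos
    intro p hp
    exact_mod_cast (hP p hp).pos
  have hsumlog : ∑ p ∈ P, Real.log p ≤ K * L := by
    have h := Real.log_le_log hprodpos hprod
    rw [Real.log_prod (fun p hp => by exact_mod_cast (hP p hp).pos.ne'),
      Real.log_rpow hH0] at h
    exact h
  -- split the sum
  rw [← Finset.sum_filter_add_sum_filter_not P (fun p => p ≤ n)]
  have part1 : ∑ p ∈ P.filter (fun p => p ≤ n), Real.log p / p ≤ L.log + Real.log K + Real.log 4 := by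
    have hsub : P.filter (fun p => p ≤ n) ⊆ Nat.primesBelow (n + 1) := by
      intro p hp
      rw [Finset.mem_filter] at hp
      exact Nat.mem_primesBelow.mpr ⟨Nat.lt_succ_of_le hp.2, hP p hp.1⟩
    calc ∑ p ∈ P.filter (fun p => p ≤ n), Real.log p / p
        ≤ ∑ p ∈ Nat.primesBelow (n + 1), Real.log p / p := by
          apply Finset.sum_le_sum_of_subset_of_nonneg hsub
          intro p hp _
          have := Nat.prime_of_mem_primesBelow hp
          positivity
      _ ≤ Real.log n + Real.log 4 := mertens_aux n hn1
      _ ≤ Real.log (K * L) + Real.log 4 := by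
          have hn0 : (0 : ℝ) < n := by exact_mod_cast hn1
          have := Real.log_le_log hn0 hnT
          linarith
      _ = L.log + Real.log K + Real.log 4 := by
          rw [Real.log_mul hK0.ne' (by linarith : L ≠ 0)]
          ring
  have part2 : ∑ p ∈ P.filter (fun p => ¬ p ≤ n), Real.log p / p ≤ 1 := by
    have h1 : ∀ p ∈ P.filter (fun p => ¬ p ≤ n), Real.log p / p ≤ Real.log p / (K * L) := by
      intro p hp
      rw [Finset.mem_filter] at hp
      have hpn : n < p := Nat.lt_of_not_le hp.2
      have hpT : K * L ≤ p := by
        have : (n : ℝ) + 1 ≤ p := by exact_mod_cast hpn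
        linarith
      exact div_le_div_of_nonneg_left (Real.log_natCast_nonneg p) hT0 hpT
    calc ∑ p ∈ P.filter (fun p => ¬ p ≤ n), Real.log p / p
        ≤ ∑ p ∈ P.filter (fun p => ¬ p ≤ n), Real.log p / (K * L) := Finset.sum_le_sum h1
      _ = (∑ p ∈ P.filter (fun p => ¬ p ≤ n), Real.log p) / (K * L) := by
          rw [Finset.sum_div]
      _ ≤ (∑ p ∈ P, Real.log p) / (K * L) := by
          exact (div_le_div_iff_of_pos_right hT0).mpr (Finset.sum_le_sum_of_subset_of_nonneg
            (Finset.filter_subset _ _) (fun p hp _ => Real.log_natCast_nonneg p))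
      _ ≤ 1 := by
          rw [div_le_one hT0]
          exact hsumlog
  linarith
end
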